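/- For the density p(x) = b_k exp(-a_k x^{2k}) with CDF P, the function x ↦ exp(a_k x^{2k}) ∫_x^∞ exp(-a_k t^{2k}) dt is strictly decreasing on (0,∞), and consequently for all x > 0: 1 - P(x) ≤ (1/2) exp(-a_k x^{2k}). -/

import Mathlib

open MeasureTheory

section Aux

private lemma aux_shift (g : ℝ → ℝ) (x : ℝ) :
    ∫ t in Set.Ioi x, g t = ∫ s in Set.Ioi (0:ℝ), g (s + x) := by
  have A : MeasurableEmbedding (fun s : ℝ => s + x) :=
    (Homeomorph.addRight x).isClosedEmbedding.measurableEmbedding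
  have h := A.setIntegral_map (μ := volume) g (Set.Ioi x)
  rw [map_add_right_eq_self volume x] at h
  rw [h]
  congr 1
  ext s
  simp

private lemma aux_integrable (k : ℕ) (a : ℝ) (ha : 0 < a) (hk : 1 ≤ k) :
    Integrable (fun t : ℝ => Real.exp (-a * t ^ (2*k))) := by
  have hIoi : IntegrableOn (fun t : ℝ => Real.exp (-a * t ^ (2*k))) (Set.Ioi 0) := by
    have := integrableOn_rpow_mul_exp_neg_mul_rpow (p := (2*k : ℕ)) (s := 0) (b := a)
      (by norm_num) (by exact_mod_cast Nat.one_le_iff_ne_zero.mpr (by omega)) ha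
    refine this.congr_fun (fun t ht => ?_) measurableSet_Ioi
    dsimp only
    rw [Real.rpow_zero, one_mul, Real.rpow_natCast]
  have hIic : IntegrableOn (fun t : ℝ => Real.exp (-a * t ^ (2*k))) (Set.Iic 0) := by
    rw [← Measure.map_neg_eq_self (volume : Measure ℝ)]
    have m : MeasurableEmbedding fun x : ℝ => -x := (Homeomorph.neg ℝ).measurableEmbedding
    rw [m.integrableOn_map_iff]
    have : ((fun t : ℝ => Real.exp (-a * t ^ (2*k))) ∘ fun x : ℝ => -x)
        = fun t : ℝ => Real.exp (-a * t ^ (2*k)) := by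
      ext t; simp [Function.comp, (even_two_mul k).neg_pow]
    rw [this, show (fun x : ℝ => -x) ⁻¹' Set.Iic 0 = Set.Ici 0 by ext t; simp]
    exact (integrableOn_Ici_iff_integrableOn_Ioi).mpr hIoi
  rw [← integrableOn_univ, ← Set.Iic_union_Ioi (a := (0:ℝ))]
  exact hIic.union hIoi

private lemma aux_even (k : ℕ) (a : ℝ) (t : ℝ) :
    Real.exp (-a * |t| ^ (2*k)) = Real.exp (-a * t ^ (2*k)) := by
  rw [pow_abs, abs_of_nonneg (Even.pow_nonneg (even_two_mul k) t)]

/-- `u ↦ (u+s)^n - u^n` is strictly monotone on `[0,∞)` for `s > 0`, `2 ≤ n`. -/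
private lemma aux_strictMono (n : ℕ) (hn : 2 ≤ n) {s : ℝ} (hs : 0 < s) :
    StrictMonoOn (fun u : ℝ => (u + s) ^ n - u ^ n) (Set.Ici 0) := by
  have hderiv : ∀ u : ℝ, HasDerivAt (fun u : ℝ => (u + s) ^ n - u ^ n)
      ((n : ℝ) * (u + s) ^ (n - 1) - (n : ℝ) * u ^ (n - 1)) u := by
    intro u
    have h1 : HasDerivAt (fun u : ℝ => (u + s) ^ n) ((n : ℝ) * (u + s) ^ (n - 1) * 1) u :=
      ((hasDerivAt_id u).add_const s).pow n
    have h2 : HasDerivAt (fun u : ℝ => u ^ n) ((n : ℝ) * u ^ (n - 1)) u := hasDerivAt_pow n u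
    simpa using h1.fun_sub h2
  refine strictMonoOn_of_deriv_pos (convex_Ici 0) ?_ ?_
  · exact Continuous.continuousOn (by continuity)
  · intro u hu
    rw [interior_Ici] at hu
    rw [(hderiv u).deriv]
    have h1 : u ^ (n - 1) < (u + s) ^ (n - 1) := by
      apply pow_lt_pow_left₀ (by linarith) (le_of_lt hu)
      omega
    have hn0 : (0:ℝ) < (n:ℝ) := by positivity
    nlinarith

end Aux

/-- The function `x ↦ exp(a x^{2k}) ∫_x^∞ exp(-a t^{2k}) dt` is strictly decreasing on `(0,∞)`,
and consequently `1 - P(x) ≤ (1/2) exp(-a x^{2k})` for `x > 0`. -/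
theorem stmt5 (k : ℕ) (hk : 1 ≤ k) (a b : ℝ) (ha : 0 < a)
    (hb : b = (∫ t : ℝ, Real.exp (-a * t ^ (2 * k)))⁻¹) :
    StrictAntiOn
      (fun x : ℝ => Real.exp (a * x ^ (2 * k)) * ∫ t in Set.Ioi x, Real.exp (-a * t ^ (2 * k)))
      (Set.Ioi (0 : ℝ))
    ∧ ∀ x : ℝ, 0 < x →
        1 - ∫ t in Set.Iic x, b * Real.exp (-a * t ^ (2 * k))
          ≤ (1 / 2) * Real.exp (-a * x ^ (2 * k)) := by
  set n := 2 * k with hn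
  have hn2 : 2 ≤ n := by omega
  have hInt : Integrable (fun t : ℝ => Real.exp (-a * t ^ n)) := aux_integrable k a ha hk
  -- rewrite F x as an integral over Ioi 0
  have hF : ∀ x : ℝ, Real.exp (a * x ^ n) * ∫ t in Set.Ioi x, Real.exp (-a * t ^ n)
      = ∫ s in Set.Ioi (0:ℝ), Real.exp (a * x ^ n - a * (s + x) ^ n) := by
    intro x
    rw [aux_shift (fun t => Real.exp (-a * t ^ n)) x, ← integral_const_mul]
    congr 1
    ext s
    rw [← Real.exp_add]
    ring_nf
  -- integrability of the shifted integrand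
  have hIntShift : ∀ x : ℝ, IntegrableOn
      (fun s : ℝ => Real.exp (a * x ^ n - a * (s + x) ^ n)) (Set.Ioi 0) := by
    intro x
    have h1 : Integrable (fun s : ℝ => Real.exp (-a * (s + x) ^ n)) := by
      have A : MeasurableEmbedding (fun s : ℝ => s + x) :=
        (Homeomorph.addRight x).isClosedEmbedding.measurableEmbedding
      exact ((measurePreserving_add_right volume x).integrable_comp_emb A).mpr hInt
    have := (h1.const_mul (Real.exp (a * x ^ n))).integrableOn (s := Set.Ioi 0)
    refine this.congr_fun (fun s _ => ?_) measurableSet_Ioi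
    dsimp only
    rw [← Real.exp_add]; ring_nf
  -- strict monotonicity half
  have hanti : StrictAntiOn
      (fun x : ℝ => Real.exp (a * x ^ n) * ∫ t in Set.Ioi x, Real.exp (-a * t ^ n))
      (Set.Ioi (0 : ℝ)) := by
    intro x hx y hy hxy
    simp only
    rw [hF x, hF y]
    have hpt : ∀ s ∈ Set.Ioi (0:ℝ),
        Real.exp (a * y ^ n - a * (s + y) ^ n) < Real.exp (a * x ^ n - a * (s + x) ^ n) := by
      intro s hs
      apply Real.exp_lt_exp.mpr
      have := aux_strictMono n hn2 hs (Set.mem_Ici.mpr (le_of_lt hx))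
        (Set.mem_Ici.mpr (le_of_lt (lt_trans hx hxy))) hxy
      simp only at this
      rw [add_comm s x, add_comm s y]
      nlinarith [mul_lt_mul_of_pos_left this ha]
    -- strict integral inequality
    have hIx := hIntShift x
    have hIy := hIntShift y
    have hsubInt : IntegrableOn (fun s : ℝ =>
        Real.exp (a * x ^ n - a * (s + x) ^ n) - Real.exp (a * y ^ n - a * (s + y) ^ n))
        (Set.Ioi 0) := hIx.sub hIy
    have hsub : 0 < ∫ s in Set.Ioi (0:ℝ),
        (Real.exp (a * x ^ n - a * (s + x) ^ n) - Real.exp (a * y ^ n - a * (s + y) ^ n)) := by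
      refine (setIntegral_pos_iff_support_of_nonneg_ae ?_ hsubInt).mpr ?_
      · filter_upwards [ae_restrict_mem measurableSet_Ioi] with s hs
        exact le_of_lt (sub_pos.mpr (hpt s hs))
      · refine lt_of_lt_of_le ?_ (measure_mono (fun s hs =>
          ⟨ne_of_gt (sub_pos.mpr (hpt s hs)), hs⟩))
        simp
    have := integral_sub hIx hIy
    rw [this] at hsub
    linarith
  refine ⟨hanti, ?_⟩
  -- second half
  have hIpos : 0 < ∫ t : ℝ, Real.exp (-a * t ^ n) := by
    rw [integral_pos_iff_support_of_nonneg_ae]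
    · simp only [Function.support, ne_eq, Real.exp_ne_zero, not_false_iff, Set.setOf_true]
      simp
    · filter_upwards with t using (Real.exp_pos _).le
    · exact hInt
  have hbpos : 0 < b := by rw [hb]; exact inv_pos.mpr hIpos
  have hbI : b * ∫ t : ℝ, Real.exp (-a * t ^ n) = 1 := by
    rw [hb]; exact inv_mul_cancel₀ (ne_of_gt hIpos)
  have hhalf : ∫ s in Set.Ioi (0:ℝ), Real.exp (-a * s ^ n)
      = (1/2) * ∫ t : ℝ, Real.exp (-a * t ^ n) := by
    have := integral_comp_abs (f := fun t : ℝ => Real.exp (-a * t ^ n))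
    have heq : ∫ t : ℝ, Real.exp (-a * |t| ^ n) = ∫ t : ℝ, Real.exp (-a * t ^ n) := by
      congr 1; ext t; exact aux_even k a t
    rw [heq] at this
    rw [this]; ring
  intro x hx
  -- split the whole integral
  have hsplit : (∫ t in Set.Iic x, Real.exp (-a * t ^ n)) + (∫ t in Set.Ioi x, Real.exp (-a * t ^ n))
      = ∫ t : ℝ, Real.exp (-a * t ^ n) := by
    rw [← setIntegral_union (Set.Iic_disjoint_Ioi le_rfl) measurableSet_Ioi
      hInt.integrableOn hInt.integrableOn, Set.Iic_union_Ioi, setIntegral_univ]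
  have hconst : ∫ t in Set.Iic x, b * Real.exp (-a * t ^ n)
      = b * ∫ t in Set.Iic x, Real.exp (-a * t ^ n) := integral_const_mul b _
  -- bound the tail
  have htail : ∫ t in Set.Ioi x, Real.exp (-a * t ^ n)
      ≤ Real.exp (-a * x ^ n) * ∫ s in Set.Ioi (0:ℝ), Real.exp (-a * s ^ n) := by
    rw [aux_shift (fun t => Real.exp (-a * t ^ n)) x, ← integral_const_mul]
    apply setIntegral_mono_on
    · have A : MeasurableEmbedding (fun s : ℝ => s + x) :=
        (Homeomorph.addRight x).isClosedEmbedding.measurableEmbedding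
      exact (((measurePreserving_add_right volume x).integrable_comp_emb A).mpr hInt).integrableOn
    · exact (hInt.const_mul _).integrableOn
    · exact measurableSet_Ioi
    · intro s hs
      rw [← Real.exp_add]
      apply Real.exp_le_exp.mpr
      have hps : x ^ n + s ^ n ≤ (s + x) ^ n := by
        rw [add_comm s x]
        exact pow_add_pow_le (le_of_lt hx) (le_of_lt hs) (by omega)
      nlinarith
  calc 1 - ∫ t in Set.Iic x, b * Real.exp (-a * t ^ n)
      = b * ∫ t in Set.Ioi x, Real.exp (-a * t ^ n) := by
        rw [hconst, ← hbI]; rw [← hsplit]; ring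
    _ ≤ b * (Real.exp (-a * x ^ n) * ∫ s in Set.Ioi (0:ℝ), Real.exp (-a * s ^ n)) := by
        exact mul_le_mul_of_nonneg_left htail (le_of_lt hbpos)
    _ = (1 / 2) * Real.exp (-a * x ^ n) := by
        rw [hhalf]
        have : b * (Real.exp (-a * x ^ n) * (1 / 2 * ∫ t : ℝ, Real.exp (-a * t ^ n)))
            = 1 / 2 * Real.exp (-a * x ^ n) * (b * ∫ t : ℝ, Real.exp (-a * t ^ n)) := by ring
        rw [this, hbI, mul_one]
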